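/- Let f : X → ℝ be locally Lipschitz continuous, let h_k → h in X, and let A_k, A ⊂ X be nonempty with A compact, A_k → A in the Hausdorff metric, and A ⊂ A_k for all k ∈ ℕ. Then lim_{k→∞} f⁰(A_k;h_k) = f⁰(A;h), and moreover the set of weak* limits of sequences a_k ∈ ∂f(A_k) equals ∂f(A). -/

import Mathlib

set_option linter.unusedSectionVars false
set_option linter.unusedVariables false
set_option maxHeartbeats 1000000

open Filter Metric Set NormedSpace
open scoped NNReal

variable {X : Type*} [NormedAddCommGroup X] [NormedSpace ℝ X]

/-- Clarke's generalized directional derivative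
`f⁰(x;h) = limsup_{y→x, t↓0⁺} (f(y+th) − f(y))/t`. -/
noncomputable def clarkeDeriv (f : X → ℝ) (x : X) (h : X) : ℝ :=
  Filter.limsup (fun p : X × ℝ => (f (p.1 + p.2 • h) - f p.1) / p.2)
    ((nhds x) ×ˢ (nhdsWithin 0 (Set.Ioi 0)))

/-- Clarke's generalized gradient `∂f(x) = {a ∈ X* : ⟨a,h⟩ ≤ f⁰(x;h) ∀ h}`. -/
def clarkeGrad (f : X → ℝ) (x : X) : Set (StrongDual ℝ X) :=
  {a | ∀ h : X, a h ≤ clarkeDeriv f x h}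

/-- Directional derivative of `f` on the set `A`: `f⁰(A;h) = sup_{y∈A} f⁰(y;h)`. -/
noncomputable def setDeriv (f : X → ℝ) (A : Set X) (h : X) : ℝ :=
  sSup ((fun y => clarkeDeriv f y h) '' A)

/-- Gradient of `f` on the set `A`: the weak*-closed convex hull of `⋃_{y∈A} ∂f(y)`. -/
def setGrad (f : X → ℝ) (A : Set X) : Set (StrongDual ℝ X) :=
  {a | StrongDual.toWeakDual a ∈
    closure ((StrongDual.toWeakDual (𝕜 := ℝ) (E := X)) '' (convexHull ℝ (⋃ y ∈ A, clarkeGrad f y)))}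

namespace Clarke

noncomputable abbrev F (x : X) : Filter (X × ℝ) := (nhds x) ×ˢ (nhdsWithin 0 (Set.Ioi 0))

noncomputable abbrev q (f : X → ℝ) (h : X) (p : X × ℝ) : ℝ := (f (p.1 + p.2 • h) - f p.1) / p.2

instance (x : X) : (F x).NeBot := by
  unfold F
  infer_instance

lemma region_mem {x : X} {δ : ℝ} (hδ : 0 < δ) : (ball x δ) ×ˢ (Ioo 0 δ) ∈ F x := by
  refine prod_mem_prod (ball_mem_nhds _ hδ) ?_
  exact mem_nhdsGT_iff_exists_Ioo_subset.2 ⟨δ, hδ, fun t ht => ht⟩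

lemma eventually_iff_region {x : X} {P : X × ℝ → Prop} :
    (∀ᶠ p in F x, P p) ↔ ∃ δ > 0, ∀ y ∈ ball x δ, ∀ t ∈ Ioo (0:ℝ) δ, P (y, t) := by
  constructor
  · intro hP
    rcases (Filter.mem_prod_iff).1 hP with ⟨s, hs, t, ht, hst⟩
    rcases Metric.mem_nhds_iff.1 hs with ⟨ε₁, hε₁, hball⟩
    rcases mem_nhdsGT_iff_exists_Ioo_subset.1 ht with ⟨ε₂, hε₂, hIoo⟩
    refine ⟨min ε₁ ε₂, lt_min hε₁ hε₂, fun y hy s hs' => ?_⟩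
    exact hst ⟨hball (mem_ball.2 (lt_of_lt_of_le (mem_ball.1 hy) (min_le_left _ _))),
      hIoo ⟨hs'.1, lt_of_lt_of_le hs'.2 (min_le_right _ _)⟩⟩
  · rintro ⟨δ, hδ, hP⟩
    filter_upwards [region_mem hδ] with p hp
    exact hP p.1 hp.1 p.2 hp.2

lemma quot_abs_bound {f : X → ℝ} {K : ℝ≥0} {x : X} {r : ℝ} (hr : 0 < r)
    (hl : LipschitzOnWith K f (ball x r)) (h : X) :
    ∀ᶠ p in F x, |q f h p| ≤ K * ‖h‖ := by
  have hδ : 0 < min (r/2) (r/(2*(‖h‖+1))) := by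
    have : (0:ℝ) < ‖h‖ + 1 := by positivity
    refine lt_min (by linarith) (by positivity)
  filter_upwards [region_mem hδ] with p hp
  obtain ⟨hy, ht⟩ := hp
  have ht0 : 0 < p.2 := ht.1
  have hy' : p.1 ∈ ball x r := by
    have := lt_of_lt_of_le (mem_ball.1 hy) (min_le_left _ _)
    exact mem_ball.2 (by linarith)
  have hyt : p.1 + p.2 • h ∈ ball x r := by
    have h1 : dist p.1 x < r/2 := lt_of_lt_of_le (mem_ball.1 hy) (min_le_left _ _)
    have h2 : p.2 < r/(2*(‖h‖+1)) := lt_of_lt_of_le ht.2 (min_le_right _ _)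
    have hpos : (0:ℝ) < ‖h‖ + 1 := by positivity
    have : ‖p.2 • h‖ ≤ p.2 * (‖h‖+1) := by
      rw [norm_smul, Real.norm_eq_abs, abs_of_pos ht0]
      nlinarith [norm_nonneg h]
    have h3 : p.2 * (‖h‖+1) < r/2 := by
      have h2' : p.2 * (2*(‖h‖+1)) < r := (lt_div_iff₀ (by positivity)).1 h2
      nlinarith
    rw [mem_ball, dist_eq_norm] at *
    calc ‖p.1 + p.2 • h - x‖ ≤ ‖p.1 - x‖ + ‖p.2 • h‖ := by
          rw [add_sub_right_comm]; exact norm_add_le _ _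
      _ < r/2 + r/2 := by refine add_lt_add_of_lt_of_le h1 (le_trans this h3.le)
      _ = r := by ring
  have hdist := hl.dist_le_mul _ hyt _ hy'
  rw [Real.dist_eq, dist_eq_norm, add_sub_cancel_left, norm_smul, Real.norm_eq_abs, abs_of_pos ht0] at hdist
  rw [abs_div, abs_of_pos ht0, div_le_iff₀ ht0]
  calc |f (p.1 + p.2 • h) - f p.1| ≤ K * (p.2 * ‖h‖) := hdist
    _ = K * ‖h‖ * p.2 := by ring

lemma bddAbove_q {f : X → ℝ} {K : ℝ≥0} {x : X} {r : ℝ} (hr : 0 < r)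
    (hl : LipschitzOnWith K f (ball x r)) (h : X) :
    IsBoundedUnder (· ≤ ·) (F x) (q f h) :=
  isBoundedUnder_of_eventually_le <|
    (quot_abs_bound hr hl h).mono fun p hp => (abs_le.1 hp).2

lemma cobdd_q {f : X → ℝ} {K : ℝ≥0} {x : X} {r : ℝ} (hr : 0 < r)
    (hl : LipschitzOnWith K f (ball x r)) (h : X) :
    IsCoboundedUnder (· ≤ ·) (F x) (q f h) :=
  isCoboundedUnder_le_of_eventually_le _ <|
    (quot_abs_bound hr hl h).mono fun p hp => (abs_le.1 hp).1

lemma clarkeDeriv_le_of_eventually {f : X → ℝ} {K : ℝ≥0} {x : X} {r : ℝ} (hr : 0 < r)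
    (hl : LipschitzOnWith K f (ball x r)) {h : X} {c : ℝ}
    (hc : ∀ᶠ p in F x, q f h p ≤ c) : clarkeDeriv f x h ≤ c :=
  Filter.limsup_le_of_le (cobdd_q hr hl h) hc

lemma clarkeDeriv_le_bound {f : X → ℝ} {K : ℝ≥0} {x : X} {r : ℝ} (hr : 0 < r)
    (hl : LipschitzOnWith K f (ball x r)) (h : X) : clarkeDeriv f x h ≤ K * ‖h‖ :=
  clarkeDeriv_le_of_eventually hr hl <| by
    filter_upwards [quot_abs_bound hr hl h] with p hp using (abs_le.1 hp).2

lemma neg_bound_le_clarkeDeriv {f : X → ℝ} {K : ℝ≥0} {x : X} {r : ℝ} (hr : 0 < r)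
    (hl : LipschitzOnWith K f (ball x r)) (h : X) : -(K * ‖h‖) ≤ clarkeDeriv f x h :=
  Filter.le_limsup_of_frequently_le
    ((quot_abs_bound hr hl h).mono (fun p hp => (abs_le.1 hp).1)).frequently
    (bddAbove_q hr hl h)

lemma eventually_le_clarkeDeriv_add {f : X → ℝ} {K : ℝ≥0} {x : X} {r : ℝ} (hr : 0 < r)
    (hl : LipschitzOnWith K f (ball x r)) (h : X) {ε : ℝ} (hε : 0 < ε) :
    ∀ᶠ p in F x, q f h p ≤ clarkeDeriv f x h + ε := by
  have hlt : limsup (q f h) (F x) < clarkeDeriv f x h + ε := lt_add_of_pos_right _ hε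
  have := Filter.eventually_lt_of_limsup_lt hlt (bddAbove_q hr hl h)
  filter_upwards [this] with p hp using hp.le

/-- Lipschitz dependence on the direction. -/
lemma clarkeDeriv_lipschitz_dir {f : X → ℝ} {K : ℝ≥0} {x : X} {r : ℝ} (hr : 0 < r)
    (hl : LipschitzOnWith K f (ball x r)) (h h' : X) :
    clarkeDeriv f x h ≤ clarkeDeriv f x h' + K * ‖h - h'‖ := by
  refine le_of_forall_pos_le_add fun ε hε => ?_
  refine clarkeDeriv_le_of_eventually hr hl ?_
  have hev := eventually_le_clarkeDeriv_add hr hl h' hε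
  have hev2 : ∀ᶠ p in F x, p.1 + p.2 • h ∈ ball x r ∧ p.1 + p.2 • h' ∈ ball x r ∧ 0 < p.2 := by
    have key : ∀ g : X, Tendsto (fun p : X × ℝ => p.1 + p.2 • g) (F x) (nhds x) := by
      intro g
      have cont : Continuous (fun p : X × ℝ => p.1 + p.2 • g) :=
        continuous_fst.add (continuous_snd.smul continuous_const)
      have : Tendsto (fun p : X × ℝ => p.1 + p.2 • g) ((nhds x) ×ˢ (nhds (0:ℝ))) (nhds x) := by
        have := cont.tendsto (x, (0:ℝ))
        simpa [nhds_prod_eq] using this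
      exact this.mono_left (prod_mono le_rfl nhdsWithin_le_nhds)
    have c1 := key h
    have c2 := key h'
    have c3 : ∀ᶠ p : X × ℝ in F x, 0 < p.2 := by
      filter_upwards [region_mem one_pos] with p hp using hp.2.1
    filter_upwards [c1 (ball_mem_nhds x hr), c2 (ball_mem_nhds x hr), c3] with p h1 h2 h3
    exact ⟨h1, h2, h3⟩
  filter_upwards [hev, hev2] with p hp1 hp2
  obtain ⟨hb1, hb2, ht0⟩ := hp2
  have key : q f h p ≤ q f h' p + K * ‖h - h'‖ := by
    have hd : |f (p.1 + p.2 • h) - f (p.1 + p.2 • h')| ≤ K * (p.2 * ‖h - h'‖) := by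
      have := hl.dist_le_mul _ hb1 _ hb2
      rw [Real.dist_eq, dist_eq_norm] at this
      calc |f (p.1 + p.2 • h) - f (p.1 + p.2 • h')| ≤ ↑K * ‖p.1 + p.2 • h - (p.1 + p.2 • h')‖ :=
            this
        _ = ↑K * (p.2 * ‖h - h'‖) := by
            rw [show p.1 + p.2 • h - (p.1 + p.2 • h') = p.2 • (h - h') by module,
              norm_smul, Real.norm_eq_abs, abs_of_pos ht0]
  -- q f h p - q f h' p = (f (y+th) - f (y+th'))/t
    have : q f h p - q f h' p = (f (p.1 + p.2 • h) - f (p.1 + p.2 • h')) / p.2 := by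
      unfold q; field_simp; ring
    have h2 : (f (p.1 + p.2 • h) - f (p.1 + p.2 • h')) / p.2 ≤ ↑K * ‖h - h'‖ := by
      rw [div_le_iff₀ ht0]
      calc f (p.1 + p.2 • h) - f (p.1 + p.2 • h') ≤ |f (p.1 + p.2 • h) - f (p.1 + p.2 • h')| :=
            le_abs_self _
        _ ≤ ↑K * (p.2 * ‖h - h'‖) := hd
        _ = ↑K * ‖h - h'‖ * p.2 := by ring
    linarith [this ▸ h2]
  calc q f h p ≤ q f h' p + ↑K * ‖h - h'‖ := key
    _ ≤ clarkeDeriv f x h' + ε + ↑K * ‖h - h'‖ := by linarith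
    _ = clarkeDeriv f x h' + ↑K * ‖h - h'‖ + ε := by ring

/-- upper semicontinuity in the base point. -/
lemma clarkeDeriv_usc {f : X → ℝ} {K : ℝ≥0} {x : X} {r : ℝ} (hr : 0 < r)
    (hl : LipschitzOnWith K f (ball x r)) (h : X) {ε : ℝ} (hε : 0 < ε) :
    ∃ δ > 0, ∀ x' ∈ ball x δ, clarkeDeriv f x' h ≤ clarkeDeriv f x h + ε := by
  obtain ⟨δ₀, hδ₀, hreg⟩ := eventually_iff_region.1 (eventually_le_clarkeDeriv_add hr hl h hε)
  refine ⟨min (δ₀/2) (r/2), lt_min (by linarith) (by linarith), fun x' hx' => ?_⟩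
  have hx'1 : dist x' x < δ₀/2 := lt_of_lt_of_le (mem_ball.1 hx') (min_le_left _ _)
  have hx'2 : dist x' x < r/2 := lt_of_lt_of_le (mem_ball.1 hx') (min_le_right _ _)
  have hl' : LipschitzOnWith K f (ball x' (r/2)) := by
    refine hl.mono fun z hz => ?_
    rw [mem_ball] at *
    calc dist z x ≤ dist z x' + dist x' x := dist_triangle _ _ _
      _ < r/2 + r/2 := add_lt_add hz hx'2
      _ = r := by ring
  refine clarkeDeriv_le_of_eventually (by linarith : (0:ℝ) < r/2) hl' ?_
  have : (ball x' (δ₀/2)) ×ˢ (Ioo 0 (δ₀/2)) ∈ F x' := region_mem (by linarith)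
  filter_upwards [this] with p hp
  refine hreg p.1 ?_ p.2 ⟨hp.2.1, by linarith [hp.2.2]⟩
  rw [mem_ball] at *
  calc dist p.1 x ≤ dist p.1 x' + dist x' x := dist_triangle _ _ _
    _ < δ₀/2 + δ₀/2 := add_lt_add hp.1 hx'1
    _ = δ₀ := by ring

lemma clarkeDeriv_zero (f : X → ℝ) (x : X) : clarkeDeriv f x 0 = 0 := by
  have : (fun p : X × ℝ => (f (p.1 + p.2 • (0:X)) - f p.1) / p.2) = fun _ => (0:ℝ) := by
    funext p; simp
  rw [clarkeDeriv, this, limsup_const]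

lemma clarkeDeriv_smul_le {f : X → ℝ} {K : ℝ≥0} {x : X} {r : ℝ} (hr : 0 < r)
    (hl : LipschitzOnWith K f (ball x r)) (h : X) {s : ℝ} (hs : 0 < s) :
    clarkeDeriv f x (s • h) ≤ s * clarkeDeriv f x h := by
  refine le_of_forall_pos_le_add fun ε hε => ?_
  have hε' : 0 < ε / s := div_pos hε hs
  obtain ⟨δ, hδ, hreg⟩ := eventually_iff_region.1 (eventually_le_clarkeDeriv_add hr hl h hε')
  refine clarkeDeriv_le_of_eventually hr hl ?_
  rw [eventually_iff_region]
  refine ⟨min δ (δ/s), lt_min hδ (by positivity), fun y hy t ht => ?_⟩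
  have hy' : y ∈ ball x δ := mem_ball.2 (lt_of_lt_of_le (mem_ball.1 hy) (min_le_left _ _))
  have ht1 : 0 < t := ht.1
  have hts : t * s ∈ Ioo (0:ℝ) δ := by
    constructor
    · positivity
    · have : t < δ/s := lt_of_lt_of_le ht.2 (min_le_right _ _)
      calc t * s < (δ/s) * s := mul_lt_mul_of_pos_right this hs
        _ = δ := by field_simp
  have hq : q f (s • h) (y, t) = s * q f h (y, t * s) := by
    unfold q
    simp only [smul_smul]
    field_simp
  have := hreg y hy' (t*s) hts
  calc q f (s • h) (y, t) = s * q f h (y, t * s) := hq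
    _ ≤ s * (clarkeDeriv f x h + ε/s) := by
        exact mul_le_mul_of_nonneg_left this hs.le
    _ = s * clarkeDeriv f x h + ε := by field_simp

lemma clarkeDeriv_smul {f : X → ℝ} {K : ℝ≥0} {x : X} {r : ℝ} (hr : 0 < r)
    (hl : LipschitzOnWith K f (ball x r)) (h : X) {s : ℝ} (hs : 0 < s) :
    clarkeDeriv f x (s • h) = s * clarkeDeriv f x h := by
  refine le_antisymm (clarkeDeriv_smul_le hr hl h hs) ?_
  have h2 := clarkeDeriv_smul_le hr hl (s • h) (inv_pos.2 hs)
  rw [inv_smul_smul₀ hs.ne'] at h2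
  calc s * clarkeDeriv f x h ≤ s * (s⁻¹ * clarkeDeriv f x (s • h)) :=
        mul_le_mul_of_nonneg_left h2 hs.le
    _ = clarkeDeriv f x (s • h) := by field_simp

lemma clarkeDeriv_add_le {f : X → ℝ} {K : ℝ≥0} {x : X} {r : ℝ} (hr : 0 < r)
    (hl : LipschitzOnWith K f (ball x r)) (h h' : X) :
    clarkeDeriv f x (h + h') ≤ clarkeDeriv f x h + clarkeDeriv f x h' := by
  refine le_of_forall_pos_le_add fun ε hε => ?_
  have hε2 : 0 < ε/2 := by linarith
  obtain ⟨δ₁, hδ₁, hreg1⟩ := eventually_iff_region.1 (eventually_le_clarkeDeriv_add hr hl h hε2)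
  obtain ⟨δ₂, hδ₂, hreg2⟩ := eventually_iff_region.1 (eventually_le_clarkeDeriv_add hr hl h' hε2)
  refine clarkeDeriv_le_of_eventually hr hl ?_
  rw [eventually_iff_region]
  have hd : (0:ℝ) < ‖h'‖ + 1 := by positivity
  refine ⟨min (min (δ₁/2) δ₂) (δ₁/(2*(‖h'‖+1))), by positivity, fun y hy t ht => ?_⟩
  have hy1 : dist y x < δ₁/2 := lt_of_lt_of_le (mem_ball.1 hy) ((min_le_left _ _).trans (min_le_left _ _))
  have hy2 : dist y x < δ₂ := lt_of_lt_of_le (mem_ball.1 hy) ((min_le_left _ _).trans (min_le_right _ _))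
  have ht0 : 0 < t := ht.1
  have ht1 : t < δ₁/2 := lt_of_lt_of_le ht.2 ((min_le_left _ _).trans (min_le_left _ _))
  have ht2 : t < δ₂ := lt_of_lt_of_le ht.2 ((min_le_left _ _).trans (min_le_right _ _))
  have ht3 : t < δ₁/(2*(‖h'‖+1)) := lt_of_lt_of_le ht.2 (min_le_right _ _)
  have hmem : y + t • h' ∈ ball x δ₁ := by
    rw [mem_ball, dist_eq_norm]
    have hn : ‖t • h'‖ ≤ t * (‖h'‖ + 1) := by
      rw [norm_smul, Real.norm_eq_abs, abs_of_pos ht0]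
      nlinarith [norm_nonneg h']
    have h2' : t * (2*(‖h'‖+1)) < δ₁ := (lt_div_iff₀ (by positivity)).1 ht3
    have : t * (‖h'‖+1) < δ₁/2 := by nlinarith
    calc ‖y + t • h' - x‖ ≤ ‖y - x‖ + ‖t • h'‖ := by
          rw [add_sub_right_comm]; exact norm_add_le _ _
      _ < δ₁/2 + δ₁/2 := by
          rw [← dist_eq_norm]; exact add_lt_add hy1 (lt_of_le_of_lt hn this)
      _ = δ₁ := by ring
  have hsplit : q f (h + h') (y, t) = q f h (y + t • h', t) + q f h' (y, t) := by
    unfold q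
    simp only
    rw [show y + t • (h + h') = y + t • h' + t • h by module]
    field_simp
    ring
  have e1 := hreg1 (y + t • h') hmem t ⟨ht0, by linarith⟩
  have e2 := hreg2 y (mem_ball.2 hy2) t ⟨ht0, ht2⟩
  calc q f (h + h') (y, t) = q f h (y + t • h', t) + q f h' (y, t) := hsplit
    _ ≤ (clarkeDeriv f x h + ε/2) + (clarkeDeriv f x h' + ε/2) := add_le_add e1 e2
    _ = clarkeDeriv f x h + clarkeDeriv f x h' + ε := by ring

lemma neg_clarkeDeriv_neg_le {f : X → ℝ} {K : ℝ≥0} {x : X} {r : ℝ} (hr : 0 < r)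
    (hl : LipschitzOnWith K f (ball x r)) (h : X) :
    -clarkeDeriv f x (-h) ≤ clarkeDeriv f x h := by
  have := clarkeDeriv_add_le hr hl h (-h)
  rw [add_neg_cancel, clarkeDeriv_zero] at this
  linarith

/-- Hahn–Banach: existence of an element of the Clarke gradient attaining `f⁰(x;h₀)`. -/
lemma exists_dual_le_clarkeDeriv {f : X → ℝ} {K : ℝ≥0} {x : X} {r : ℝ} (hr : 0 < r)
    (hl : LipschitzOnWith K f (ball x r)) (h₀ : X) :
    ∃ a : StrongDual ℝ X, (∀ h, a h ≤ clarkeDeriv f x h) ∧ a h₀ = clarkeDeriv f x h₀ := by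
  set N : X → ℝ := clarkeDeriv f x with hN
  have N_hom : ∀ c : ℝ, 0 < c → ∀ v, N (c • v) = c * N v := fun c hc v =>
    clarkeDeriv_smul hr hl v hc
  have N_add : ∀ v w, N (v + w) ≤ N v + N w := fun v w => clarkeDeriv_add_le hr hl v w
  have N_bound : ∀ v, N v ≤ K * ‖v‖ := fun v => clarkeDeriv_le_bound hr hl v
  have N_neg : ∀ v, -N (-v) ≤ N v := fun v => neg_clarkeDeriv_neg_le hr hl v
  -- main construction for a nonzero direction
  have main : ∀ v : X, v ≠ 0 → ∃ a : StrongDual ℝ X, (∀ h, a h ≤ N h) ∧ a v = N v := by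
    intro v hv
    have H : ∀ c : ℝ, c • v = 0 → c • N v = 0 := by
      intro c hc
      rcases smul_eq_zero.1 hc with h | h
      · rw [h, zero_smul]
      · exact absurd h hv
    set pm : X →ₗ.[ℝ] ℝ := LinearPMap.mkSpanSingleton' v (N v) H with hpm
    have hb : ∀ z : pm.domain, pm z ≤ N z := by
      rintro ⟨z, hz⟩
      have hz' : z ∈ (ℝ ∙ v) := by
        rwa [← LinearPMap.domain_mkSpanSingleton (σ := RingHom.id ℝ) v (N v) H]
      obtain ⟨c, hc⟩ := Submodule.mem_span_singleton.1 hz'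
      have hzz : (⟨z, hz⟩ : pm.domain) = ⟨c • v, hc ▸ hz⟩ := by
        exact Subtype.ext hc.symm
      rw [hzz, LinearPMap.mkSpanSingleton'_apply]
      have : z = c • v := hc.symm
      rw [show ((⟨c • v, hc ▸ hz⟩ : pm.domain) : X) = c • v from rfl]
      rcases lt_trichotomy c 0 with hc0 | hc0 | hc0
      · have h1 : N (c • v) = (-c) * N (-v) := by
          rw [show c • v = (-c) • (-v) by module]
          exact N_hom (-c) (by linarith) (-v)
        have h2 : -N (-v) ≤ N v := N_neg v
        rw [RingHom.id_apply, smul_eq_mul, h1]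
        nlinarith
      · subst hc0
        simp only [zero_smul, RingHom.id_apply, smul_eq_mul, zero_mul]
        rw [show N (0:X) = 0 from clarkeDeriv_zero f x]
      · rw [N_hom c hc0 v, RingHom.id_apply, smul_eq_mul]
    obtain ⟨g, hg1, hg2⟩ := exists_extension_of_le_sublinear pm N N_hom N_add hb
    have hgv : g v = N v := by
      have hvmem : v ∈ pm.domain := by
        rw [LinearPMap.domain_mkSpanSingleton]
        exact Submodule.mem_span_singleton_self v
      have := hg1 ⟨v, hvmem⟩
      rw [this]
      exact LinearPMap.mkSpanSingleton'_apply_self v (N v) H hvmem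
    have hcont : ∀ w : X, ‖g w‖ ≤ (K:ℝ) * ‖w‖ := by
      intro w
      rw [Real.norm_eq_abs, abs_le]
      constructor
      · have := hg2 (-w)
        rw [map_neg] at this
        have h2 := N_bound (-w)
        rw [norm_neg] at h2
        linarith
      · exact (hg2 w).trans (N_bound w)
    refine ⟨LinearMap.mkContinuous g (K:ℝ) hcont, fun h => ?_, ?_⟩
    · exact hg2 h
    · exact hgv
  by_cases h0 : h₀ = 0
  · subst h0
    by_cases hX : ∀ v : X, v = 0
    · refine ⟨0, fun h => ?_, by simp [hN, clarkeDeriv_zero]⟩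
      rw [hX h, hN, clarkeDeriv_zero]
      simp
    · push_neg at hX
      obtain ⟨v, hv⟩ := hX
      obtain ⟨a, ha1, _⟩ := main v hv
      exact ⟨a, ha1, by simp [hN, clarkeDeriv_zero]⟩
  · exact main h₀ h0

lemma lipschitzOnWith_weaken {K K' : ℝ≥0} {f : X → ℝ} {s : Set X}
    (h : LipschitzOnWith K f s) (hK : K ≤ K') : LipschitzOnWith K' f s := fun x hx y hy =>
  (h hx hy).trans (mul_le_mul_left (ENNReal.coe_le_coe.2 hK) _)

lemma setDeriv_le {f : X → ℝ} {A : Set X} (hA : A.Nonempty) {h : X} {c : ℝ}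
    (hc : ∀ y ∈ A, clarkeDeriv f y h ≤ c) : setDeriv f A h ≤ c :=
  csSup_le (hA.image _) (by rintro v ⟨y, hy, rfl⟩; exact hc y hy)

lemma le_setDeriv {f : X → ℝ} {A : Set X} {h : X} {c : ℝ} {y : X} (hy : y ∈ A)
    (hb : ∀ z ∈ A, clarkeDeriv f z h ≤ c) : clarkeDeriv f y h ≤ setDeriv f A h :=
  le_csSup ⟨c, by rintro v ⟨z, hz, rfl⟩; exact hb z hz⟩ (Set.mem_image_of_mem _ hy)

/-- Uniform Lipschitz data near a compact set. -/
lemma exists_uniform_lipschitz {f : X → ℝ} (hf : LocallyLipschitz f) {A₀ : Set X}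
    (hcomp : IsCompact A₀) :
    ∃ (K : ℝ≥0) (r : ℝ), 0 < r ∧ ∀ x ∈ thickening r A₀, LipschitzOnWith K f (ball x r) := by
  have hloc : ∀ y : X, ∃ (Ky : ℝ≥0) (ry : ℝ), 0 < ry ∧ LipschitzOnWith Ky f (ball y ry) := by
    intro y
    obtain ⟨K, t, ht, hl⟩ := hf y
    obtain ⟨ry, hry, hball⟩ := Metric.mem_nhds_iff.1 ht
    exact ⟨K, ry, hry, hl.mono hball⟩
  choose Kf rad hrad hlip using hloc
  rcases A₀.eq_empty_or_nonempty with hA | hA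
  · exact ⟨1, 1, one_pos, by simp [hA]⟩
  have hcov : A₀ ⊆ ⋃ y ∈ A₀, ball y (rad y / 4) := fun y hy =>
    mem_biUnion hy (mem_ball_self (by linarith [hrad y]))
  obtain ⟨b, hbsub, hbfin, hbcov⟩ :=
    hcomp.elim_finite_subcover_image (fun y _ => isOpen_ball) hcov
  have hbne : b.Nonempty := by
    obtain ⟨y, hy⟩ := hA
    rcases mem_iUnion₂.1 (hbcov hy) with ⟨z, hz, _⟩
    exact ⟨z, hz⟩
  lift b to Finset X using hbfin
  have hbne' : b.Nonempty := by simpa [Finset.coe_nonempty] using hbne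
  refine ⟨b.sup Kf, b.inf' hbne' (fun y => rad y / 4), ?_, ?_⟩
  · rw [Finset.lt_inf'_iff]
    intro y hy
    linarith [hrad y]
  · set r := b.inf' hbne' (fun y => rad y / 4) with hrdef
    intro x hx
    rcases Metric.mem_thickening_iff.1 hx with ⟨z, hz, hdz⟩
    rcases mem_iUnion₂.1 (hbcov hz) with ⟨y, hy, hzy⟩
    have hry : r ≤ rad y / 4 := Finset.inf'_le _ hy
    have hsubb : ball x r ⊆ ball y (rad y) := by
      intro w hw
      rw [mem_ball] at *
      calc dist w y ≤ dist w x + dist x z + dist z y := dist_triangle4 _ _ _ _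
        _ < r + r + rad y / 4 := by
            have := mem_ball.1 hzy
            gcongr
        _ ≤ rad y / 4 + rad y / 4 + rad y / 4 := by gcongr
        _ < rad y := by linarith [hrad y]
    exact lipschitzOnWith_weaken ((hlip y).mono hsubb) (Finset.le_sup hy)

/-- Part 1 of the proposition. -/
lemma setDeriv_tendsto (f : X → ℝ) (hf : LocallyLipschitz f)
    (h : ℕ → X) (h₀ : X) (hh : Filter.Tendsto h atTop (nhds h₀))
    (A : ℕ → Set X) (A₀ : Set X) (hne : ∀ k, (A k).Nonempty) (hA₀ : A₀.Nonempty)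
    (hcomp : IsCompact A₀)
    (hconv : ∀ ε : ℝ, 0 < ε → ∀ᶠ k in atTop,
      A₀ ⊆ Metric.thickening ε (A k) ∧ A k ⊆ Metric.thickening ε A₀)
    (hsub : ∀ k, A₀ ⊆ A k) :
    Filter.Tendsto (fun k => setDeriv f (A k) (h k)) atTop (nhds (setDeriv f A₀ h₀)) := by
  obtain ⟨K, r, hr, hK⟩ := exists_uniform_lipschitz hf hcomp
  set L := setDeriv f A₀ h₀ with hL
  have hself : A₀ ⊆ thickening r A₀ := self_subset_thickening hr A₀
  have hboundA₀ : ∀ (g : X), ∀ y ∈ A₀, clarkeDeriv f y g ≤ (K:ℝ) * ‖g‖ := fun g y hy =>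
    clarkeDeriv_le_bound hr (hK y (hself hy)) g
  have hLy : ∀ y ∈ A₀, clarkeDeriv f y h₀ ≤ L := fun y hy =>
    le_setDeriv hy (hboundA₀ h₀)
  rw [Metric.tendsto_nhds]
  intro ε hε
  have hε' : 0 < ε/2 := by linarith
  -- upper bound eventuality
  have upper : ∀ᶠ k in atTop, setDeriv f (A k) (h k) ≤ L + ε/2 := by
    -- for each y ∈ A₀ get a usc radius
    have husc : ∀ y : X, y ∈ A₀ → ∃ δy > 0, ∀ x' ∈ ball y δy,
        clarkeDeriv f x' h₀ ≤ clarkeDeriv f y h₀ + ε/4 := by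
      intro y hy
      exact clarkeDeriv_usc hr (hK y (hself hy)) h₀ (by linarith)
    choose! δy hδy hyusc using husc
    have hcov : A₀ ⊆ ⋃ y ∈ A₀, ball y (δy y / 2) := fun y hy =>
      mem_biUnion hy (mem_ball_self (by linarith [hδy y hy]))
    obtain ⟨b, hbsub, hbfin, hbcov⟩ :=
      hcomp.elim_finite_subcover_image (fun y hy => isOpen_ball) hcov
    have hbne : b.Nonempty := by
      obtain ⟨y, hy⟩ := hA₀
      rcases mem_iUnion₂.1 (hbcov hy) with ⟨z, hz, _⟩
      exact ⟨z, hz⟩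
    lift b to Finset X using hbfin
    have hbne' : b.Nonempty := by simpa [Finset.coe_nonempty] using hbne
    set δ₁ := b.inf' hbne' (fun y => δy y / 2) with hδ₁def
    have hδ₁pos : 0 < δ₁ := by
      rw [hδ₁def, Finset.lt_inf'_iff]
      intro y hy
      linarith [hδy y (hbsub hy)]
    set δ := min (min r δ₁) (ε/(4*((K:ℝ)+1))) with hδdef
    have hKpos : (0:ℝ) < (K:ℝ) + 1 := by positivity
    have hδpos : 0 < δ := by
      refine lt_min (lt_min hr hδ₁pos) (by positivity)
    -- key pointwise claim
    have key : ∀ x ∈ thickening δ A₀, ∀ g : X, ‖g - h₀‖ ≤ δ →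
        clarkeDeriv f x g ≤ L + ε/2 := by
      intro x hx g hg
      rcases Metric.mem_thickening_iff.1 hx with ⟨z, hz, hdz⟩
      rcases mem_iUnion₂.1 (hbcov hz) with ⟨y, hy, hzy⟩
      have hxy : x ∈ ball y (δy y) := by
        rw [mem_ball] at *
        calc dist x y ≤ dist x z + dist z y := dist_triangle _ _ _
          _ < δ + δy y / 2 := add_lt_add hdz hzy
          _ ≤ δy y / 2 + δy y / 2 := by
              have h1 : δ ≤ δ₁ := (min_le_left _ _).trans (min_le_right _ _)
              have h2 : δ₁ ≤ δy y / 2 := Finset.inf'_le _ hy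
              gcongr
              linarith
          _ = δy y := by ring
      have hx0 : clarkeDeriv f x h₀ ≤ clarkeDeriv f y h₀ + ε/4 := hyusc y (hbsub hy) x hxy
      have hxr : x ∈ thickening r A₀ :=
        Metric.mem_thickening_iff.2 ⟨z, hz, lt_of_lt_of_le hdz
          ((min_le_left _ _).trans (min_le_left _ _) : δ ≤ r)⟩
      have hlip : clarkeDeriv f x g ≤ clarkeDeriv f x h₀ + (K:ℝ) * ‖g - h₀‖ :=
        clarkeDeriv_lipschitz_dir hr (hK x hxr) g h₀
      have hKg : (K:ℝ) * ‖g - h₀‖ ≤ ε/4 := by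
        have hδ2 : δ ≤ ε/(4*((K:ℝ)+1)) := min_le_right _ _
        have hK0 : (0:ℝ) ≤ (K:ℝ) := K.coe_nonneg
        have : (K:ℝ) * ‖g - h₀‖ ≤ (K:ℝ) * (ε/(4*((K:ℝ)+1))) := by
          refine mul_le_mul_of_nonneg_left (hg.trans hδ2) hK0
        refine this.trans ?_
        rw [mul_div_assoc', div_le_div_iff₀ (by positivity) (by norm_num : (0:ℝ) < 4)]
        nlinarith
      calc clarkeDeriv f x g ≤ clarkeDeriv f x h₀ + (K:ℝ) * ‖g - h₀‖ := hlip
        _ ≤ (clarkeDeriv f y h₀ + ε/4) + ε/4 := by linarith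
        _ ≤ L + ε/2 := by linarith [hLy y (hbsub hy)]
    filter_upwards [hconv δ hδpos, Metric.tendsto_nhds.1 hh δ hδpos] with k hk1 hk2
    refine setDeriv_le (hne k) fun z hz => ?_
    refine key z (hk1.2 hz) (h k) ?_
    rw [← dist_eq_norm]
    exact hk2.le
  -- lower bound eventuality
  have lower : ∀ᶠ k in atTop, L - ε/2 ≤ setDeriv f (A k) (h k) := by
    have hKpos : (0:ℝ) < (K:ℝ) + 1 := by positivity
    set δ' := ε/(2*((K:ℝ)+1)) with hδ'def
    have hδ'pos : 0 < δ' := by positivity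
    filter_upwards [hconv r hr, Metric.tendsto_nhds.1 hh δ' hδ'pos] with k hk1 hk2
    have hbk : ∀ z ∈ A k, clarkeDeriv f z (h k) ≤ (K:ℝ) * ‖h k‖ := fun z hz =>
      clarkeDeriv_le_bound hr (hK z (hk1.2 hz)) (h k)
    have hstep : ∀ y ∈ A₀, clarkeDeriv f y h₀ ≤ setDeriv f (A k) (h k) + ε/2 := by
      intro y hy
      have h1 : clarkeDeriv f y h₀ ≤ clarkeDeriv f y (h k) + (K:ℝ) * ‖h₀ - h k‖ :=
        clarkeDeriv_lipschitz_dir hr (hK y (hself hy)) h₀ (h k)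
      have h2 : clarkeDeriv f y (h k) ≤ setDeriv f (A k) (h k) :=
        le_setDeriv (hsub k hy) hbk
      have h3 : (K:ℝ) * ‖h₀ - h k‖ ≤ ε/2 := by
        have hn : ‖h₀ - h k‖ ≤ δ' := by
          rw [norm_sub_rev, ← dist_eq_norm]
          exact hk2.le
        have hK0 : (0:ℝ) ≤ (K:ℝ) := K.coe_nonneg
        have : (K:ℝ) * ‖h₀ - h k‖ ≤ (K:ℝ) * δ' := mul_le_mul_of_nonneg_left hn hK0
        refine this.trans ?_
        rw [hδ'def, mul_div_assoc', div_le_div_iff₀ (by positivity) (by norm_num : (0:ℝ) < 2)]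
        nlinarith
      linarith
    have : L ≤ setDeriv f (A k) (h k) + ε/2 :=
      csSup_le (hA₀.image _) (by rintro v ⟨y, hy, rfl⟩; exact hstep y hy)
    linarith
  filter_upwards [upper, lower] with k h1 h2
  rw [Real.dist_eq, abs_sub_lt_iff]
  constructor <;> linarith

/-- evaluation at `h` as a linear map on the weak dual. -/
noncomputable def evalL (h : X) : WeakDual ℝ X →ₗ[ℝ] ℝ where
  toFun a := a h
  map_add' a b := rfl
  map_smul' c a := rfl

/-- Every continuous linear functional on the weak-* dual is evaluation at a point. -/
lemma exists_eval_of_continuous (φ : WeakDual ℝ X →L[ℝ] ℝ) :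
    ∃ v : X, ∀ a : WeakDual ℝ X, φ a = a v := by
  classical
  set B := topDualPairing ℝ X with hB
  have hS : φ ⁻¹' (Metric.ball (0:ℝ) 1) ∈ nhds (0 : WeakDual ℝ X) := by
    have : Metric.ball (0:ℝ) 1 ∈ nhds (φ 0) := by
      rw [map_zero]
      exact Metric.ball_mem_nhds _ one_pos
    exact φ.continuous.continuousAt.preimage_mem_nhds this
  obtain ⟨U, hU, hUsub⟩ := (LinearMap.hasBasis_weakBilin B).mem_iff.1 hS
  obtain ⟨s, r, hr, rfl⟩ := (SeminormFamily.basisSets_iff _).1 hU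
  have key : ∀ a : WeakDual ℝ X, (∀ y ∈ s, a y = 0) → φ a = 0 := by
    intro a ha
    by_contra hφa
    have hmem : ∀ c : ℝ, |c * φ a| < 1 := by
      intro c
      have hball : c • a ∈ Seminorm.ball (s.sup B.toSeminormFamily) 0 r := by
        refine (Seminorm.mem_ball_zero _).2 ?_
        refine Seminorm.finset_sup_apply_lt hr fun i hi => ?_
        show ‖c * a i‖ < r
        rw [ha i hi, mul_zero, norm_zero]
        exact hr
      have := hUsub hball
      replace this : φ (c • a) ∈ Metric.ball (0:ℝ) 1 := this
      rw [mem_ball_zero_iff, map_smul] at this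
      rw [abs_mul]
      simpa [Real.norm_eq_abs, smul_eq_mul, abs_mul] using this
    have := hmem (2 / φ a)
    rw [div_mul_cancel₀ _ hφa] at this
    norm_num at this
  have hker : ⨅ i : (s : Set X), LinearMap.ker (evalL (X := X) (i : X)) ≤
      LinearMap.ker (φ : WeakDual ℝ X →ₗ[ℝ] ℝ) := by
    intro a ha
    rw [LinearMap.mem_ker]
    rw [Submodule.mem_iInf] at ha
    refine key a fun y hy => ?_
    have := ha ⟨y, hy⟩
    rwa [LinearMap.mem_ker] at this
  have hspan := mem_span_of_iInf_ker_le_ker (𝕜 := ℝ) hker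
  obtain ⟨c, hc⟩ := (Submodule.mem_span_range_iff_exists_fun ℝ).1 hspan
  refine ⟨∑ i : (s : Set X), c i • (i : X), fun a => ?_⟩
  have h1 : φ a = (∑ i : (s : Set X), c i • evalL (X := X) (i : X)) a := by
    rw [hc]; rfl
  rw [h1, map_sum]
  simp only [LinearMap.sum_apply, LinearMap.smul_apply, map_smul]
  rfl

instance : LocallyConvexSpace ℝ (WeakDual ℝ X) :=
  WeakBilin.locallyConvexSpace (B := topDualPairing ℝ X)

lemma isLinear_toWeakDual :
    IsLinearMap ℝ (fun a : StrongDual ℝ X => (StrongDual.toWeakDual a : WeakDual ℝ X)) :=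
  ⟨fun x y => map_add _ _ _, fun c x => map_smul _ _ _⟩

lemma image_convexHull_toWeakDual (s : Set (StrongDual ℝ X)) :
    (StrongDual.toWeakDual (𝕜 := ℝ) (E := X)) '' (convexHull ℝ s) =
      convexHull ℝ ((StrongDual.toWeakDual (𝕜 := ℝ) (E := X)) '' s) :=
  isLinear_toWeakDual.image_convexHull s


lemma setGrad_mono {f : X → ℝ} {A B : Set X} (hAB : A ⊆ B) : setGrad f A ⊆ setGrad f B := by
  intro a ha
  have hsub : ((StrongDual.toWeakDual (𝕜 := ℝ) (E := X)) '' (convexHull ℝ (⋃ y ∈ A, clarkeGrad f y))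
      : Set (WeakDual ℝ X)) ⊆
      (StrongDual.toWeakDual (𝕜 := ℝ) (E := X)) '' (convexHull ℝ (⋃ y ∈ B, clarkeGrad f y)) :=
    Set.image_mono (convexHull_mono (biUnion_subset_biUnion_left hAB))
  exact closure_mono hsub ha

lemma isLinear_eval (g : X) : IsLinearMap ℝ (fun b : WeakDual ℝ X => b g) :=
  ⟨fun a b => rfl, fun c a => rfl⟩

/-- Members of the set gradient are dominated by the set derivative. -/
lemma setGrad_le_setDeriv {f : X → ℝ} {K : ℝ≥0} {A : Set X} (hA : A.Nonempty)
    (hbd : ∀ g : X, ∀ y ∈ A, clarkeDeriv f y g ≤ (K:ℝ) * ‖g‖)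
    {a : StrongDual ℝ X} (ha : a ∈ setGrad f A) (g : X) : a g ≤ setDeriv f A g := by
  set T : Set (WeakDual ℝ X) := {b | b g ≤ setDeriv f A g} with hT
  have hclosed : IsClosed T :=
    IsClosed.preimage (WeakDual.eval_continuous g) isClosed_Iic
  have hconvex : Convex ℝ T := convex_halfSpace_le (isLinear_eval g) _
  have hsubset : (StrongDual.toWeakDual (𝕜 := ℝ) (E := X)) ''
      (convexHull ℝ (⋃ y ∈ A, clarkeGrad f y)) ⊆ T := by
    rw [image_convexHull_toWeakDual]
    refine convexHull_min ?_ hconvex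
    rintro b ⟨b', hb', rfl⟩
    rcases mem_iUnion₂.1 hb' with ⟨y, hy, hby⟩
    have h1 : b' g ≤ clarkeDeriv f y g := hby g
    have h2 : clarkeDeriv f y g ≤ setDeriv f A g := le_setDeriv hy (hbd g)
    exact le_trans h1 h2
  have := closure_minimal hsubset hclosed ha
  exact this

/-- Conversely, domination by the set derivative implies membership of the set gradient,
on a compact-like set with uniform Lipschitz data. -/
lemma mem_setGrad_of_le_setDeriv {f : X → ℝ} {K : ℝ≥0} {r : ℝ} (hr : 0 < r) {A : Set X}
    (hA : A.Nonempty) (hlip : ∀ y ∈ A, LipschitzOnWith K f (ball y r))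
    {a : StrongDual ℝ X} (ha : ∀ g : X, a g ≤ setDeriv f A g) : a ∈ setGrad f A := by
  by_contra hnot
  set C := closure ((StrongDual.toWeakDual (𝕜 := ℝ) (E := X)) ''
    (convexHull ℝ (⋃ y ∈ A, clarkeGrad f y))) with hC
  have hCconv : Convex ℝ C := by
    refine Convex.closure ?_
    rw [image_convexHull_toWeakDual]
    exact (convex_convexHull ℝ _)
  have hCclosed : IsClosed C := isClosed_closure
  obtain ⟨φ, u, hu1, hu2⟩ := geometric_hahn_banach_point_closed hCconv hCclosed hnot
  have hu1' : φ (StrongDual.toWeakDual a) < u := hu1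
  obtain ⟨v, hv⟩ := exists_eval_of_continuous (-φ)
  -- for b ∈ C we have  -u < -φ b,  i.e.  b v < -u ... careful with signs
  -- φ (toWeakDual a) < u and ∀ b ∈ C, u < φ b.
  -- (-φ) b = b v, so φ b = -(b v).  Thus u < -(b v), i.e.  b v < -u for b ∈ C,
  -- and a v = (toWeakDual a) v = -φ (toWeakDual a) > -u.
  have hav : -u < a v := by
    have := hv (StrongDual.toWeakDual a)
    have h2 : (-φ) (StrongDual.toWeakDual a) = a v := this
    rw [ContinuousLinearMap.neg_apply] at h2
    linarith [hu1']
  have hbv : ∀ b ∈ C, (b : WeakDual ℝ X) v < -u := by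
    intro b hb
    have h1 := hu2 b hb
    have h2 : (-φ) b = b v := hv b
    rw [ContinuousLinearMap.neg_apply] at h2
    linarith
  have hstep : ∀ y ∈ A, clarkeDeriv f y v < -u := by
    intro y hy
    obtain ⟨b, hb1, hb2⟩ := exists_dual_le_clarkeDeriv hr (hlip y hy) v
    have hbC : StrongDual.toWeakDual b ∈ C :=
      subset_closure (mem_image_of_mem _ (subset_convexHull ℝ _ (mem_biUnion hy hb1)))
    have := hbv _ hbC
    have h3 : (StrongDual.toWeakDual b : WeakDual ℝ X) v = b v := rfl
    rw [h3, hb2] at this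
    exact this
  have hsd : setDeriv f A v ≤ -u :=
    csSup_le (hA.image _) (by rintro w ⟨y, hy, rfl⟩; exact (hstep y hy).le)
  linarith [ha v, hav]

end Clarke

/-- Proposition 2.2, final part: if moreover `A ⊆ A_k` for all `k`, then
`lim_k f⁰(A_k;h_k) = f⁰(A;h)` and the set of weak* limits of sequences
`a_k ∈ ∂f(A_k)` equals `∂f(A)`. -/
theorem setDeriv_tendsto_and_weakStar_limits_eq_of_subset
    [CompleteSpace X] (f : X → ℝ) (hf : LocallyLipschitz f)
    (h : ℕ → X) (h₀ : X) (hh : Tendsto h atTop (nhds h₀))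
    (A : ℕ → Set X) (A₀ : Set X) (hne : ∀ k, (A k).Nonempty) (hA₀ : A₀.Nonempty)
    (hcomp : IsCompact A₀)
    (hconv : ∀ ε : ℝ, 0 < ε → ∀ᶠ k in atTop,
      A₀ ⊆ Metric.thickening ε (A k) ∧ A k ⊆ Metric.thickening ε A₀)
    (hsub : ∀ k, A₀ ⊆ A k) :
    Tendsto (fun k => setDeriv f (A k) (h k)) atTop (nhds (setDeriv f A₀ h₀)) ∧
    {a₀ : StrongDual ℝ X | ∃ a : ℕ → StrongDual ℝ X, (∀ k, a k ∈ setGrad f (A k)) ∧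
        Tendsto (fun k => StrongDual.toWeakDual (a k)) atTop (nhds (StrongDual.toWeakDual a₀))} =
      setGrad f A₀ := by
  open Clarke in
  obtain ⟨K, r, hr, hK⟩ := Clarke.exists_uniform_lipschitz hf hcomp
  have hself : A₀ ⊆ thickening r A₀ := self_subset_thickening hr A₀
  refine ⟨setDeriv_tendsto f hf h h₀ hh A A₀ hne hA₀ hcomp hconv hsub, ?_⟩
  ext a₀
  simp only [Set.mem_setOf_eq]
  constructor
  · rintro ⟨a, hak, hconv_a⟩
    refine mem_setGrad_of_le_setDeriv hr hA₀ (fun y hy => hK y (hself hy)) ?_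
    intro g
    have t1 : Tendsto (fun k => (a k) g) atTop (nhds (a₀ g)) := by
      have := (tendsto_iff_forall_eval_tendsto_topDualPairing.1 hconv_a) g
      exact this
    have t2 : Tendsto (fun k => setDeriv f (A k) g) atTop (nhds (setDeriv f A₀ g)) :=
      setDeriv_tendsto f hf (fun _ => g) g tendsto_const_nhds A A₀ hne hA₀ hcomp hconv hsub
    have ev1 : ∀ᶠ k in atTop, (a k) g ≤ setDeriv f (A k) g := by
      filter_upwards [hconv r hr] with k hk
      exact setGrad_le_setDeriv (K := K) (hne k)
        (fun g' y hy => clarkeDeriv_le_bound hr (hK y (hk.2 hy)) g') (hak k) g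
    exact le_of_tendsto_of_tendsto t1 t2 ev1
  · intro ha₀
    exact ⟨fun _ => a₀, fun k => setGrad_mono (hsub k) ha₀, tendsto_const_nhds⟩
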